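/- Let X be a finite, connected, undirected graph with at least two vertices and doubling constant c_X ≥ 2. Then for every vertex x ∈ V and every ε ∈ (0,1), |B(x, ε·diam(X))| ≤ 1 + |V| · (1 − 1/(2·c_X))^{⌊log₁₀(1/ε)⌋}. -/
import Mathlib
open Finset

/-- The closed ball of radius `R` (a real number) about `x` in the shortest-path metric
of the graph `G`. -/
noncomputable def gball {V : Type} [Fintype V] (G : SimpleGraph V) (x : V) (R : ℝ) : Finset V :=
  @Finset.filter _ (fun y => (G.dist x y : ℝ) ≤ R) (Classical.decPred _) Finset.univ

/-- The diameter of the graph `G` in the shortest-path metric. -/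
noncomputable def gdiam {V : Type} [Fintype V] (G : SimpleGraph V) : ℕ :=
  Finset.univ.sup fun p : V × V => G.dist p.1 p.2

lemma mem_gball {V : Type} [Fintype V] (G : SimpleGraph V) (x y : V) (R : ℝ) :
    y ∈ gball G x R ↔ (G.dist x y : ℝ) ≤ R := by
  classical
  simp [gball]

lemma walk_exists_mid {V : Type} (G : SimpleGraph V) (hconn : G.Connected) :
    ∀ {x z : V} (p : G.Walk x z) (d : ℕ), d ≤ p.length →
      ∃ y : V, G.dist x y ≤ d ∧ G.dist y z ≤ p.length - d := by
  intro x z p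
  induction p with
  | @nil a =>
    intro d hd
    simp only [SimpleGraph.Walk.length_nil, Nat.le_zero] at hd
    subst hd
    exact ⟨a, by simp, by simp⟩
  | @cons a b w h q ih =>
    intro d hd
    cases d with
    | zero =>
      refine ⟨a, by simp, ?_⟩
      simpa using SimpleGraph.dist_le (q.cons h)
    | succ d' =>
      obtain ⟨y, h1, h2⟩ := ih d' (by simpa using hd)
      refine ⟨y, ?_, ?_⟩
      · have hab : G.dist a b = 1 := SimpleGraph.dist_eq_one_iff_adj.mpr h
        have := hconn.dist_triangle (u := a) (v := b) (w := y)
        omega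
      · simpa using h2

lemma exists_dist_eq' {V : Type} (G : SimpleGraph V) (hconn : G.Connected)
    (x z : V) (d : ℕ) (hd : d ≤ G.dist x z) : ∃ y : V, G.dist x y = d := by
  obtain ⟨p, hp⟩ := (hconn x z).exists_walk_length_eq_dist
  obtain ⟨y, h1, h2⟩ := walk_exists_mid G hconn p d (by omega)
  refine ⟨y, le_antisymm h1 ?_⟩
  have htri := hconn.dist_triangle (u := x) (v := y) (w := z)
  omega
lemma key_step {V : Type} [Fintype V] (G : SimpleGraph V) (c : ℝ)
    (hconn : G.Connected) (hc : 2 ≤ c)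
    (hdoub : ∀ (x : V) (R : ℝ), 0 < R →
        ((gball G x (2 * R)).card : ℝ) ≤ c * ((gball G x R).card : ℝ))
    (x : V) (R : ℝ) (hR : 1/2 ≤ R) (hRD : 10 * R ≤ (gdiam G : ℝ)) :
    ((gball G x R).card : ℝ) ≤ (1 - 1/(2*c)) * ((gball G x (10 * R)).card : ℝ) := by
  classical
  have hR0 : (0:ℝ) < R := by linarith
  have hVne : Nonempty V := hconn.nonempty
  obtain ⟨p, -, hp⟩ := Finset.exists_mem_eq_sup (Finset.univ : Finset (V × V))
    Finset.univ_nonempty (fun p : V × V => G.dist p.1 p.2)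
  have htri : G.dist p.1 p.2 ≤ G.dist p.1 x + G.dist x p.2 := hconn.dist_triangle
  have hcomm : G.dist p.1 x = G.dist x p.1 := SimpleGraph.dist_comm
  have hz : ∃ z : V, 5 * R ≤ (G.dist x z : ℝ) := by
    rcases le_total (G.dist x p.1) (G.dist x p.2) with hle | hle
    · refine ⟨p.2, ?_⟩
      have h2 : gdiam G ≤ 2 * G.dist x p.2 := by rw [gdiam, hp]; omega
      have h3 : (gdiam G : ℝ) ≤ 2 * (G.dist x p.2 : ℝ) := by exact_mod_cast h2
      linarith
    · refine ⟨p.1, ?_⟩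
      have h2 : gdiam G ≤ 2 * G.dist x p.1 := by rw [gdiam, hp]; omega
      have h3 : (gdiam G : ℝ) ≤ 2 * (G.dist x p.1 : ℝ) := by exact_mod_cast h2
      linarith
  obtain ⟨z, hz5⟩ := hz
  set d : ℕ := ⌊5 * R⌋₊ with hdd
  have hd_le : (d : ℝ) ≤ 5 * R := Nat.floor_le (by linarith)
  have hd_gt : 3 * R < (d : ℝ) := by
    have := Nat.sub_one_lt_floor (5 * R)
    rw [← hdd] at this
    linarith
  have hdz : d ≤ G.dist x z := by
    have h : (d:ℝ) ≤ (G.dist x z : ℝ) := le_trans hd_le hz5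
    exact_mod_cast h
  obtain ⟨y, hy⟩ := exists_dist_eq' G hconn x z d hdz
  set r : ℝ := ((d:ℝ) + R)/2 with hrr
  have hr0 : 0 < r := by
    have : (0:ℝ) ≤ (d:ℝ) := Nat.cast_nonneg d
    rw [hrr]; linarith
  have hxy : (G.dist x y : ℝ) = (d : ℝ) := by exact_mod_cast hy
  have hsub1 : gball G x R ⊆ gball G y (2 * r) := by
    intro w hw
    rw [mem_gball] at hw ⊢
    have t1 : G.dist y w ≤ G.dist y x + G.dist x w := hconn.dist_triangle
    have t1' : (G.dist y w : ℝ) ≤ (G.dist y x : ℝ) + (G.dist x w : ℝ) := by exact_mod_cast t1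
    have hyx : (G.dist y x : ℝ) = (d:ℝ) := by rw [SimpleGraph.dist_comm]; exact hxy
    rw [hrr]; linarith
  have hsub2 : gball G y r ⊆ gball G x (10 * R) := by
    intro w hw
    rw [mem_gball] at hw ⊢
    have t1 : G.dist x w ≤ G.dist x y + G.dist y w := hconn.dist_triangle
    have t1' : (G.dist x w : ℝ) ≤ (G.dist x y : ℝ) + (G.dist y w : ℝ) := by exact_mod_cast t1
    rw [hrr] at hw; linarith [hxy ▸ t1']
  have hsub3 : gball G x R ⊆ gball G x (10 * R) := by
    intro w hw
    rw [mem_gball] at hw ⊢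
    linarith
  have hdisj : Disjoint (gball G x R) (gball G y r) := by
    rw [Finset.disjoint_left]
    intro w hw1 hw2
    rw [mem_gball] at hw1 hw2
    have t1 : G.dist x y ≤ G.dist x w + G.dist w y := hconn.dist_triangle
    have t1' : (G.dist x y : ℝ) ≤ (G.dist x w : ℝ) + (G.dist w y : ℝ) := by exact_mod_cast t1
    have hwy : (G.dist w y : ℝ) = (G.dist y w : ℝ) := by rw [SimpleGraph.dist_comm]
    rw [hxy] at t1'
    rw [hrr] at hw2
    linarith [hwy ▸ t1']
  have hcard : ((gball G x R).card : ℝ) + ((gball G y r).card : ℝ)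
      ≤ ((gball G x (10*R)).card : ℝ) := by
    have h1 := Finset.card_le_card (Finset.union_subset hsub3 hsub2)
    rw [Finset.card_union_of_disjoint hdisj] at h1
    exact_mod_cast h1
  have hdb : ((gball G x R).card : ℝ) ≤ c * ((gball G y r).card : ℝ) := by
    have h1 : ((gball G x R).card : ℝ) ≤ ((gball G y (2*r)).card : ℝ) := by
      exact_mod_cast Finset.card_le_card hsub1
    exact le_trans h1 (hdoub y r hr0)
  set a : ℝ := ((gball G x R).card : ℝ)
  set b : ℝ := ((gball G y r).card : ℝ)
  set t : ℝ := ((gball G x (10*R)).card : ℝ)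
  have ha0 : 0 ≤ a := Nat.cast_nonneg _
  have hb0 : 0 ≤ b := Nat.cast_nonneg _
  have ht0 : 0 ≤ t := Nat.cast_nonneg _
  rw [show (1 - 1/(2*c)) * t = ((2*c-1)*t)/(2*c) by field_simp,
    le_div_iff₀ (by linarith : (0:ℝ) < 2*c)]
  nlinarith [mul_nonneg (by linarith : (0:ℝ) ≤ c - 1) hb0,
    mul_nonneg (by linarith : (0:ℝ) ≤ 2*c - 1) (by linarith : (0:ℝ) ≤ t - (a + b))]

/-- in a finite connected graph with at least two vertices and doubling constant
`c ≥ 2`, for every vertex `x` and `ε ∈ (0,1)`,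
`|B(x, ε·diam(X))| ≤ 1 + |V|·(1 - 1/(2c))^⌊log₁₀(1/ε)⌋`. -/
theorem small_ball_cardinality_bound
    (V : Type) [Fintype V] (G : SimpleGraph V) (c : ℝ)
    (hconn : G.Connected)
    (hcard : 2 ≤ Fintype.card V)
    (hc : 2 ≤ c)
    -- `c` is the doubling constant of `G`
    (hdoub : ∀ (x : V) (R : ℝ), 0 < R →
        ((gball G x (2 * R)).card : ℝ) ≤ c * ((gball G x R).card : ℝ))
    (x : V) (ε : ℝ) (hε0 : 0 < ε) (hε1 : ε < 1) :
    ((gball G x (ε * (gdiam G : ℝ))).card : ℝ)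
      ≤ 1 + (Fintype.card V : ℝ) * (1 - 1 / (2 * c)) ^ ⌊Real.logb 10 (1 / ε)⌋₊ := by
  classical
  set D : ℝ := (gdiam G : ℝ) with hD
  set k : ℕ := ⌊Real.logb 10 (1/ε)⌋₊ with hk
  set θ : ℝ := 1 - 1/(2*c) with hθ
  have hc0 : (0:ℝ) < c := by linarith
  have h14 : (1:ℝ)/(2*c) ≤ 1/4 := by
    apply one_div_le_one_div_of_le <;> linarith
  have hθ0 : 0 ≤ θ := by rw [hθ]; linarith
  have hθk0 : 0 ≤ θ ^ k := pow_nonneg hθ0 k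
  have hD0 : (0:ℝ) ≤ D := Nat.cast_nonneg _
  have h10k : (10:ℝ)^k * ε ≤ 1 := by
    have hlogb0 : 0 ≤ Real.logb 10 (1/ε) :=
      Real.logb_nonneg (by norm_num) (by rw [le_div_iff₀ hε0]; linarith)
    have h1 : (k:ℝ) ≤ Real.logb 10 (1/ε) := by rw [hk]; exact Nat.floor_le hlogb0
    have h2 : (10:ℝ)^(k:ℕ) ≤ 1/ε := by
      calc (10:ℝ)^k = (10:ℝ) ^ ((k:ℕ):ℝ) := (Real.rpow_natCast 10 k).symm
      _ ≤ (10:ℝ) ^ Real.logb 10 (1/ε) :=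
          Real.rpow_le_rpow_of_exponent_le (by norm_num) h1
      _ = 1/ε := Real.rpow_logb (by norm_num) (by norm_num) (by positivity)
    calc (10:ℝ)^k * ε ≤ (1/ε) * ε := mul_le_mul_of_nonneg_right h2 hε0.le
    _ = 1 := by field_simp
  by_cases hsmall : ε * D < 1/2
  · have hball : gball G x (ε * D) ⊆ {x} := by
      intro w hw
      rw [mem_gball] at hw
      have hlt : (G.dist x w : ℝ) < 1 := by linarith
      have hlt' : G.dist x w < 1 := by exact_mod_cast hlt
      have h0 : G.dist x w = 0 := Nat.lt_one_iff.mp hlt'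
      have hxw : x = w := (hconn.dist_eq_zero_iff).mp h0
      exact Finset.mem_singleton.mpr hxw.symm
    have hcle : ((gball G x (ε*D)).card : ℝ) ≤ 1 := by
      have h := Finset.card_le_card hball
      rw [Finset.card_singleton] at h
      exact_mod_cast h
    have hnn : 0 ≤ (Fintype.card V : ℝ) * θ^k := mul_nonneg (Nat.cast_nonneg _) hθk0
    linarith
  · push_neg at hsmall
    have main : ∀ j : ℕ, j ≤ k →
        ((gball G x (ε * D)).card : ℝ)
          ≤ θ^j * ((gball G x ((10:ℝ)^j * (ε * D))).card : ℝ) := by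
      intro j
      induction j with
      | zero => intro _; simp
      | succ n ih =>
        intro hjk
        have h1 := ih (by omega)
        have h1le : (1:ℝ) ≤ (10:ℝ)^n := one_le_pow₀ (by norm_num)
        have hRn : (1:ℝ)/2 ≤ (10:ℝ)^n * (ε * D) := by nlinarith
        have hRD : 10 * ((10:ℝ)^n * (ε * D)) ≤ (gdiam G : ℝ) := by
          have hpow : (10:ℝ)^(n+1) ≤ (10:ℝ)^k :=
            pow_le_pow_right₀ (by norm_num) hjk
          have hle1 : (10:ℝ)^(n+1) * ε ≤ 1 :=
            le_trans (mul_le_mul_of_nonneg_right hpow hε0.le) h10k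
          calc 10 * ((10:ℝ)^n * (ε*D)) = ((10:ℝ)^(n+1) * ε) * D := by ring
          _ ≤ 1 * D := mul_le_mul_of_nonneg_right hle1 hD0
          _ = D := one_mul D
        have h2 := key_step G c hconn hc hdoub x ((10:ℝ)^n * (ε*D)) hRn hRD
        calc ((gball G x (ε * D)).card : ℝ)
            ≤ θ^n * ((gball G x ((10:ℝ)^n * (ε * D))).card : ℝ) := h1
        _ ≤ θ^n * (θ * ((gball G x (10 * ((10:ℝ)^n * (ε*D)))).card : ℝ)) :=
            mul_le_mul_of_nonneg_left h2 (pow_nonneg hθ0 n)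
        _ = θ^(n+1) * ((gball G x ((10:ℝ)^(n+1) * (ε * D))).card : ℝ) := by
            rw [show (10:ℝ)^(n+1)*(ε*D) = 10*((10:ℝ)^n*(ε*D)) by ring]; ring
    have hfin := main k le_rfl
    have hle : ((gball G x ((10:ℝ)^k * (ε * D))).card : ℝ) ≤ (Fintype.card V : ℝ) := by
      have := Finset.card_le_card (Finset.subset_univ (gball G x ((10:ℝ)^k * (ε * D))))
      rw [Finset.card_univ] at this
      exact_mod_cast this
    have h3 := mul_le_mul_of_nonneg_left hle hθk0
    have h4 : θ^k * (Fintype.card V:ℝ) = (Fintype.card V:ℝ) * θ^k := mul_comm _ _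
    linarith
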